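/- Let φ be a stability function on an abelian length category A and p ∈ P. Then the full subcategory A_p consisting of the zero object and the φ-semistable objects of phase exactly p is a wide (i.e., exact abelian, closed under extensions, kernels and cokernels) subcategory of A. -/

import Mathlib

open CategoryTheory CategoryTheory.Limits

universe u v

variable {C : Type u} [Category.{v} C] [Abelian C] {P : Type*} [LinearOrder P]

/-- The see-saw property for a stability function, on short exact sequences of nonzero objects. -/
def SeeSaw (φ : C → P) : Prop :=
  ∀ S : ShortComplex C, S.ShortExact →
    ¬ IsZero S.X₁ → ¬ IsZero S.X₂ → ¬ IsZero S.X₃ →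
    (φ S.X₁ < φ S.X₂ ∧ φ S.X₂ < φ S.X₃) ∨
    (φ S.X₃ < φ S.X₂ ∧ φ S.X₂ < φ S.X₁) ∨
    (φ S.X₁ = φ S.X₂ ∧ φ S.X₂ = φ S.X₃)

/-- A stability function is constant on isomorphism classes. -/
def IsoInvariant (φ : C → P) : Prop := ∀ ⦃M N : C⦄, (M ≅ N) → φ M = φ N

/-- `M` is φ-semistable: every nonzero proper subobject has phase ≤ φ M. -/
def Semistable (φ : C → P) (M : C) : Prop :=
  ∀ ⦃L : C⦄ (i : L ⟶ M), Mono i → ¬ IsZero L → ¬ IsIso i → φ L ≤ φ M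

/-- `M` is φ-stable: every nonzero proper subobject has phase < φ M. -/
def Stable (φ : C → P) (M : C) : Prop :=
  ∀ ⦃L : C⦄ (i : L ⟶ M), Mono i → ¬ IsZero L → ¬ IsIso i → φ L < φ M

/-- The class `A_p` of the zero objects and the φ-semistable objects of phase exactly `p`. -/
def Ap {C : Type u} [Category.{v} C] [Abelian C] {P : Type*} [LinearOrder P]
    (φ : C → P) (p : P) (M : C) : Prop :=
  IsZero M ∨ (Semistable φ M ∧ φ M = p)

/-! ### Auxiliary lemmas -/

section Aux

variable {φ : C → P}

/-- Semistability is invariant under isomorphism. -/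
lemma semistable_of_iso (hiso : IsoInvariant φ) {M N : C} (e : M ≅ N)
    (hM : Semistable φ M) : Semistable φ N := by
  intro L i hm hL hni
  haveI := hm
  haveI : Mono (i ≫ e.inv) := mono_comp _ _
  have hni' : ¬ IsIso (i ≫ e.inv) := by
    intro h
    apply hni
    have : i = (i ≫ e.inv) ≫ e.hom := by simp
    rw [this]
    haveI := h
    infer_instance
  calc φ L ≤ φ M := hM (i ≫ e.inv) ‹_› hL hni'
    _ = φ N := hiso e

/-- Membership in `A_p` is invariant under isomorphism. -/
lemma Ap_of_iso (hiso : IsoInvariant φ) {p : P} {M N : C} (e : M ≅ N)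
    (h : Ap φ p M) : Ap φ p N := by
  rcases h with h | ⟨h1, h2⟩
  · exact Or.inl (h.of_iso e.symm)
  · exact Or.inr ⟨semistable_of_iso hiso e h1, (hiso e.symm).trans h2⟩

/-- The short exact sequence `ker e → M → I` attached to an epimorphism `e`. -/
lemma ses_of_epi {M I : C} (e : M ⟶ I) [Epi e] :
    (ShortComplex.mk (kernel.ι e) e (kernel.condition e)).ShortExact where
  exact := ShortComplex.exact_of_f_is_kernel _ (kernelIsKernel e)
  mono_f := inferInstance
  epi_g := ‹_›

/-- The short exact sequence `A → B → coker i` attached to a monomorphism `i`. -/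
lemma ses_of_mono {A B : C} (i : A ⟶ B) [Mono i] :
    (ShortComplex.mk i (cokernel.π i) (cokernel.condition i)).ShortExact where
  exact := ShortComplex.exact_of_g_is_cokernel _ (cokernelIsCokernel i)
  mono_f := ‹_›
  epi_g := inferInstance

/-- `M` is φ-cosemistable: every nonzero proper quotient has phase ≥ φ M. -/
def Cosemistable (φ : C → P) (M : C) : Prop :=
  ∀ ⦃Q : C⦄ (q : M ⟶ Q), Epi q → ¬ IsZero Q → ¬ IsIso q → φ M ≤ φ Q

/-- Under the see-saw property, semistable objects are cosemistable. -/
lemma cosemistable_of_semistable (hss : SeeSaw φ) {M : C} (hM : Semistable φ M) :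
    Cosemistable φ M := by
  intro Q q hq hQ hni
  haveI := hq
  have hM0 : ¬ IsZero M := fun h => hQ (IsZero.of_epi q h)
  have hK : ¬ IsZero (kernel q) := by
    intro h
    haveI := Preadditive.mono_of_isZero_kernel q h
    exact hni (isIso_of_mono_of_epi q)
  have hιni : ¬ IsIso (kernel.ι q) := by
    intro h
    haveI := h
    have hq0 : q = 0 := by
      rw [← Category.id_comp q, ← IsIso.inv_hom_id (kernel.ι q), Category.assoc,
        kernel.condition, comp_zero]
    exact hQ (IsZero.of_epi_eq_zero q hq0)
  have hKM : φ (kernel q) ≤ φ M := hM (kernel.ι q) inferInstance hK hιni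
  rcases hss _ (ses_of_epi q) hK hM0 hQ with ⟨h1, h2⟩ | ⟨h1, h2⟩ | ⟨h1, h2⟩
  · exact le_of_lt h2
  · exact absurd hKM (not_le_of_gt h2)
  · exact le_of_eq h2

/-- Under the see-saw property, cosemistable nonzero objects are semistable. -/
lemma semistable_of_cosemistable (hss : SeeSaw φ) {M : C} (hM0 : ¬ IsZero M)
    (hM : Cosemistable φ M) : Semistable φ M := by
  intro L i hm hL hni
  haveI := hm
  have hQ : ¬ IsZero (cokernel i) := by
    intro h
    haveI := Preadditive.epi_of_isZero_cokernel i h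
    exact hni (isIso_of_mono_of_epi i)
  have hπni : ¬ IsIso (cokernel.π i) := by
    intro h
    haveI := h
    have hi0 : i = 0 := by
      rw [← cancel_mono (cokernel.π i), zero_comp]
      exact cokernel.condition i
    exact hL (IsZero.of_mono_eq_zero i hi0)
  have hMQ : φ M ≤ φ (cokernel i) := hM (cokernel.π i) inferInstance hQ hπni
  rcases hss _ (ses_of_mono i) hL hM0 hQ with ⟨h1, h2⟩ | ⟨h1, h2⟩ | ⟨h1, h2⟩
  · exact le_of_lt h1
  · exact absurd hMQ (not_le_of_gt h1)
  · exact le_of_eq h1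

/-- The phase of a nonzero subobject of a semistable object of phase `p` is ≤ `p`. -/
lemma phase_sub_le (hiso : IsoInvariant φ) {p : P} {N : C} (hN : Semistable φ N)
    (hNp : φ N = p) {L : C} (i : L ⟶ N) (hm : Mono i) (hL : ¬ IsZero L) : φ L ≤ p := by
  by_cases h : IsIso i
  · haveI := h
    exact le_of_eq ((hiso (asIso i)).trans hNp)
  · exact hNp ▸ hN i hm hL h

/-- The phase of a nonzero quotient of a semistable object of phase `p` is ≥ `p`. -/
lemma phase_quot_ge (hss : SeeSaw φ) (hiso : IsoInvariant φ) {p : P} {M : C}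
    (hM : Semistable φ M) (hMp : φ M = p) {Q : C} (q : M ⟶ Q) (he : Epi q)
    (hQ : ¬ IsZero Q) : p ≤ φ Q := by
  by_cases h : IsIso q
  · haveI := h
    exact le_of_eq (hMp ▸ hiso (asIso q))
  · exact hMp ▸ cosemistable_of_semistable hss hM q he hQ h

/-- `A_p` is closed under kernels. -/
lemma Ap_kernel (hss : SeeSaw φ) (hiso : IsoInvariant φ) (p : P) {M N : C}
    (f : M ⟶ N) (hM : Ap φ p M) (hN : Ap φ p N) : Ap φ p (kernel f) := by
  rcases hM with hM0 | ⟨hMs, hMp⟩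
  · exact Or.inl (IsZero.of_mono (kernel.ι f) hM0)
  by_cases hK : IsZero (kernel f)
  · exact Or.inl hK
  rcases hN with hN0 | ⟨hNs, hNp⟩
  · have hf : f = 0 := hN0.eq_of_tgt f 0
    exact Ap_of_iso hiso (kernelIsoOfEq hf ≪≫ kernelZeroIsoSource).symm (Or.inr ⟨hMs, hMp⟩)
  set e := Abelian.factorThruImage f with he
  set m := Abelian.image.ι f with hm
  by_cases hI : IsZero (Abelian.image f)
  · have hf : f = 0 := by
      rw [← Abelian.image.fac f, hI.eq_of_src (Abelian.image.ι f) 0, comp_zero]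
    exact Ap_of_iso hiso (kernelIsoOfEq hf ≪≫ kernelZeroIsoSource).symm (Or.inr ⟨hMs, hMp⟩)
  have iso1 : kernel e ≅ kernel f :=
    (kernelCompMono e m).symm ≪≫ kernelIsoOfEq (Abelian.image.fac f)
  apply Ap_of_iso hiso iso1
  have hK' : ¬ IsZero (kernel e) := fun h => hK (h.of_iso iso1.symm)
  have hM0 : ¬ IsZero M := fun h => hK' (IsZero.of_mono (kernel.ι e) h)
  have hιni : ¬ IsIso (kernel.ι e) := by
    intro h
    haveI := h
    have he0 : e = 0 := by
      rw [← Category.id_comp e, ← IsIso.inv_hom_id (kernel.ι e), Category.assoc,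
        kernel.condition, comp_zero]
    exact hI (IsZero.of_epi_eq_zero e he0)
  have hKle : φ (kernel e) ≤ p := phase_sub_le hiso hMs hMp (kernel.ι e) inferInstance hK'
  have hIle : φ (Abelian.image f) ≤ p := phase_sub_le hiso hNs hNp m inferInstance hI
  rcases hss _ (ses_of_epi e) hK' hM0 hI with ⟨h1, h2⟩ | ⟨h1, h2⟩ | ⟨h1, h2⟩
  · exact absurd hIle (not_le_of_gt (hMp ▸ h2))
  · exact absurd hKle (not_le_of_gt (hMp ▸ h2))
  · refine Or.inr ⟨?_, h1.trans hMp⟩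
    intro L i him hL hni
    haveI := him
    haveI : Mono (i ≫ kernel.ι e) := mono_comp _ _
    have hni' : ¬ IsIso (i ≫ kernel.ι e) := by
      intro h
      haveI := h
      haveI : Epi (i ≫ kernel.ι e) := inferInstance
      haveI : Epi (kernel.ι e) := epi_of_epi i (kernel.ι e)
      exact hιni (isIso_of_mono_of_epi _)
    calc φ L ≤ φ M := hMs (i ≫ kernel.ι e) ‹_› hL hni'
      _ = φ (kernel e) := (hMp.trans (h1.trans hMp).symm)

/-- `A_p` is closed under cokernels. -/
lemma Ap_cokernel (hss : SeeSaw φ) (hiso : IsoInvariant φ) (p : P) {M N : C}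
    (f : M ⟶ N) (hM : Ap φ p M) (hN : Ap φ p N) : Ap φ p (cokernel f) := by
  rcases hN with hN0 | ⟨hNs, hNp⟩
  · exact Or.inl (IsZero.of_epi (cokernel.π f) hN0)
  by_cases hQ : IsZero (cokernel f)
  · exact Or.inl hQ
  rcases hM with hM0 | ⟨hMs, hMp⟩
  · have hf : f = 0 := hM0.eq_of_src f 0
    exact Ap_of_iso hiso (cokernelIsoOfEq hf ≪≫ cokernelZeroIsoTarget).symm (Or.inr ⟨hNs, hNp⟩)
  set e := Abelian.factorThruImage f with he
  set m := Abelian.image.ι f with hm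
  by_cases hI : IsZero (Abelian.image f)
  · have hf : f = 0 := by
      rw [← Abelian.image.fac f, hI.eq_of_src (Abelian.image.ι f) 0, comp_zero]
    exact Ap_of_iso hiso (cokernelIsoOfEq hf ≪≫ cokernelZeroIsoTarget).symm (Or.inr ⟨hNs, hNp⟩)
  have iso2 : cokernel m ≅ cokernel f :=
    (cokernelEpiComp e m).symm ≪≫ cokernelIsoOfEq (Abelian.image.fac f)
  apply Ap_of_iso hiso iso2
  have hQ' : ¬ IsZero (cokernel m) := fun h => hQ (h.of_iso iso2.symm)
  have hN0 : ¬ IsZero N := fun h => hQ' (IsZero.of_epi (cokernel.π m) h)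
  have hmni : ¬ IsIso m := by
    intro h
    haveI := h
    exact hQ' (IsZero.of_epi_eq_zero (cokernel.π m) (cokernel.π_of_epi m))
  have hIle : φ (Abelian.image f) ≤ p :=
    (hNp ▸ hNs m inferInstance hI hmni : φ (Abelian.image f) ≤ p)
  have hIge : p ≤ φ (Abelian.image f) := phase_quot_ge hss hiso hMs hMp e inferInstance hI
  rcases hss _ (ses_of_mono m) hI hN0 hQ' with ⟨h1, h2⟩ | ⟨h1, h2⟩ | ⟨h1, h2⟩
  · exact absurd hIge (not_le_of_gt (hNp ▸ h1))
  · exact absurd hIle (not_le_of_gt (hNp ▸ h2))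
  have hQp : φ (cokernel m) = p := h2.symm.trans hNp
  refine Or.inr ⟨semistable_of_cosemistable hss hQ' ?_, hQp⟩
  intro R q hq hR hni
  haveI := hq
  haveI : Epi (cokernel.π m ≫ q) := epi_comp _ _
  have : p ≤ φ R := phase_quot_ge hss hiso hNs hNp (cokernel.π m ≫ q) inferInstance hR
  exact hQp ▸ this

/-- `A_p` is closed under extensions. -/
lemma Ap_extension (hss : SeeSaw φ) (hiso : IsoInvariant φ) (p : P)
    (S : ShortComplex C) (hS : S.ShortExact) (hA1 : Ap φ p S.X₁) (hA3 : Ap φ p S.X₃) :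
    Ap φ p S.X₂ := by
  haveI := hS.mono_f
  haveI := hS.epi_g
  by_cases h1 : IsZero S.X₁
  · haveI : Mono S.g := by
      apply Preadditive.mono_of_cancel_zero
      intro T g hg
      obtain ⟨l, hl⟩ := KernelFork.IsLimit.lift' hS.fIsKernel g hg
      rw [← hl, h1.eq_of_tgt l 0, zero_comp]
    haveI : IsIso S.g := isIso_of_mono_of_epi _
    exact Ap_of_iso hiso (asIso S.g).symm hA3
  by_cases h3 : IsZero S.X₃
  · haveI : Epi S.f := by
      apply Preadditive.epi_of_cancel_zero
      intro T g hg
      obtain ⟨l, hl⟩ := CokernelCofork.IsColimit.desc' hS.gIsCokernel g hg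
      rw [← hl, h3.eq_of_src l 0, comp_zero]
    haveI : IsIso S.f := isIso_of_mono_of_epi _
    exact Ap_of_iso hiso (asIso S.f) hA1
  rcases hA1 with h | ⟨hs1, hp1⟩
  · exact absurd h h1
  rcases hA3 with h | ⟨hs3, hp3⟩
  · exact absurd h h3
  have h2 : ¬ IsZero S.X₂ := fun h => h1 (IsZero.of_mono S.f h)
  have h2p : φ S.X₂ = p := by
    rcases hss S hS h1 h2 h3 with ⟨ha, hb⟩ | ⟨ha, hb⟩ | ⟨ha, hb⟩
    · exact absurd (ha.trans hb) (by rw [hp1, hp3]; exact lt_irrefl p)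
    · exact absurd (ha.trans hb) (by rw [hp1, hp3]; exact lt_irrefl p)
    · exact ha.symm.trans hp1
  refine Or.inr ⟨?_, h2p⟩
  intro L j hjm hL hjni
  haveI := hjm
  rw [h2p]
  by_cases hIq : IsZero (Abelian.image (j ≫ S.g))
  · have hq0 : j ≫ S.g = 0 := by
      rw [← Abelian.image.fac (j ≫ S.g), hIq.eq_of_src (Abelian.image.ι (j ≫ S.g)) 0,
        comp_zero]
    obtain ⟨l, hl⟩ := KernelFork.IsLimit.lift' hS.fIsKernel j hq0
    simp only [Fork.ι_ofι] at hl
    haveI : Mono (l ≫ S.f) := by rw [hl]; exact hjm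
    haveI : Mono l := mono_of_mono l S.f
    exact phase_sub_le hiso hs1 hp1 l inferInstance hL
  by_cases hKq : IsZero (kernel (Abelian.factorThruImage (j ≫ S.g)))
  · haveI : Mono (Abelian.factorThruImage (j ≫ S.g)) :=
      Preadditive.mono_of_isZero_kernel _ hKq
    haveI : Mono (j ≫ S.g) := by
      rw [← Abelian.image.fac (j ≫ S.g)]
      exact mono_comp _ _
    exact phase_sub_le hiso hs3 hp3 (j ≫ S.g) inferInstance hL
  have hcond : (kernel.ι (Abelian.factorThruImage (j ≫ S.g)) ≫ j) ≫ S.g = 0 := by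
    rw [Category.assoc]
    calc kernel.ι (Abelian.factorThruImage (j ≫ S.g)) ≫ j ≫ S.g
        = (kernel.ι (Abelian.factorThruImage (j ≫ S.g)) ≫ Abelian.factorThruImage (j ≫ S.g)) ≫
            Abelian.image.ι (j ≫ S.g) := by
          rw [Category.assoc, Abelian.image.fac]
      _ = 0 := by rw [kernel.condition, zero_comp]
  obtain ⟨k, hk⟩ := KernelFork.IsLimit.lift' hS.fIsKernel
    (kernel.ι (Abelian.factorThruImage (j ≫ S.g)) ≫ j) hcond
  simp only [Fork.ι_ofι] at hk
  haveI : Mono (kernel.ι (Abelian.factorThruImage (j ≫ S.g)) ≫ j) := mono_comp _ _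
  haveI : Mono (k ≫ S.f) := by rw [hk]; infer_instance
  haveI : Mono k := mono_of_mono k S.f
  have hKle : φ (kernel (Abelian.factorThruImage (j ≫ S.g))) ≤ p :=
    phase_sub_le hiso hs1 hp1 k inferInstance hKq
  have hIle : φ (Abelian.image (j ≫ S.g)) ≤ p :=
    phase_sub_le hiso hs3 hp3 (Abelian.image.ι (j ≫ S.g)) inferInstance hIq
  rcases hss _ (ses_of_epi (Abelian.factorThruImage (j ≫ S.g))) hKq hL hIq with
    ⟨ha, hb⟩ | ⟨ha, hb⟩ | ⟨ha, hb⟩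
  · exact le_of_lt (lt_of_lt_of_le hb hIle)
  · exact le_of_lt (lt_of_lt_of_le hb hKle)
  · exact ha.symm.trans_le hKle

end Aux

/-- `A_p` is a wide subcategory: it is closed under kernels, cokernels and extensions. -/
theorem Ap_wide {C : Type u} [Category.{v} C] [Abelian C]
    [∀ X : C, IsNoetherianObject X] [∀ X : C, IsArtinianObject X]
    {P : Type*} [LinearOrder P] (φ : C → P)
    (hss : SeeSaw φ) (hiso : IsoInvariant φ) (p : P) :
    (∀ ⦃M N : C⦄ (f : M ⟶ N), Ap φ p M → Ap φ p N → Ap φ p (kernel f)) ∧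
    (∀ ⦃M N : C⦄ (f : M ⟶ N), Ap φ p M → Ap φ p N → Ap φ p (cokernel f)) ∧
    (∀ S : ShortComplex C, S.ShortExact → Ap φ p S.X₁ → Ap φ p S.X₃ → Ap φ p S.X₂) :=
  ⟨fun _ _ f hM hN => Ap_kernel hss hiso p f hM hN,
   fun _ _ f hM hN => Ap_cokernel hss hiso p f hM hN,
   fun S hS h1 h3 => Ap_extension hss hiso p S hS h1 h3⟩
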